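/- Let G = (V,E) be a finite simple graph with no isolated vertices. If (i) every vertex of G has distance at most two to a pendant vertex, and (ii) no two non-pendant edges of type I are incident, then the independent set game Γ_G is population monotonic, i.e., admits a population monotonic allocation scheme. -/

import Mathlib

open Finset

variable {V : Type*} [Fintype V] [DecidableEq V]

/-- `I` is an independent set of the graph `G`. -/
def Indep (G : SimpleGraph V) (I : Finset V) : Prop :=
  ∀ u ∈ I, ∀ v ∈ I, ¬ G.Adj u v

/-- The independence number of `G` restricted to the vertex set `U`,
i.e. `α(G[U])`: the maximum size of an independent set contained in `U`. -/
noncomputable def alphaOn (G : SimpleGraph V) (U : Set V) : ℕ :=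
  sSup {n : ℕ | ∃ I : Finset V, ↑I ⊆ U ∧ Indep G I ∧ I.card = n}

/-- `δ(v)`: the set of edges of `G` incident to the vertex `v`. -/
def incEdges (G : SimpleGraph V) (v : V) : Set (Sym2 V) :=
  {e | e ∈ G.edgeSet ∧ v ∈ e}

/-- `δ(v)` as a finset. -/
def incFinset (G : SimpleGraph V) [DecidableRel G.Adj] (v : V) : Finset (Sym2 V) :=
  G.edgeFinset.filter (fun e => v ∈ e)

/-- `V⟨S⟩`: the set of vertices of `G` all of whose incident edges lie in `S`. -/
def onlyInc (G : SimpleGraph V) (S : Set (Sym2 V)) : Set V :=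
  {v | incEdges G v ⊆ S}

/-- The characteristic function of the independent set game on `G`:
`γ(S) = α(G[V⟨S⟩])`. -/
noncomputable def gammaIS (G : SimpleGraph V) (S : Finset (Sym2 V)) : ℕ :=
  alphaOn G (onlyInc G ↑S)

/-- `x` is a population monotonic allocation scheme (PMAS) of the independent set
game on `G`: it is nonnegative, efficient, and monotone.  Coalitions are the
nonempty subsets of the player set `N = E(G)` (`G.edgeFinset`). -/
def IsPMAS (G : SimpleGraph V) [DecidableRel G.Adj]
    (x : Finset (Sym2 V) → Sym2 V → ℝ) : Prop :=
  (∀ S ⊆ G.edgeFinset, ∀ i ∈ S, 0 ≤ x S i) ∧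
  (∀ S ⊆ G.edgeFinset, S.Nonempty → ∑ i ∈ S, x S i = (gammaIS G S : ℝ)) ∧
  (∀ S T : Finset (Sym2 V), S ⊆ T → T ⊆ G.edgeFinset → S.Nonempty →
    ∀ i ∈ S, x S i ≤ x T i)

/-- An edge of `G` is pendant if one of its endpoints has degree one. -/
def PendantEdge (G : SimpleGraph V) [DecidableRel G.Adj] (e : Sym2 V) : Prop :=
  e ∈ G.edgeSet ∧ ∃ v ∈ e, G.degree v = 1

/-- A non-pendant edge of type I: not incident to any pendant edge. -/
def TypeI (G : SimpleGraph V) [DecidableRel G.Adj] (e : Sym2 V) : Prop :=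
  e ∈ G.edgeSet ∧ ¬ PendantEdge G e ∧
    ∀ f : Sym2 V, PendantEdge G f → ¬ ∃ w : V, w ∈ e ∧ w ∈ f

/-- A non-pendant edge of type II: incident to some pendant edge. -/
def TypeII (G : SimpleGraph V) [DecidableRel G.Adj] (e : Sym2 V) : Prop :=
  e ∈ G.edgeSet ∧ ¬ PendantEdge G e ∧
    ∃ f : Sym2 V, PendantEdge G f ∧ ∃ w : V, w ∈ e ∧ w ∈ f

/-- The vertex `v` has distance at most two to some pendant vertex of `G`. -/
def NearPendant (G : SimpleGraph V) [DecidableRel G.Adj] (v : V) : Prop :=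
  ∃ p : V, G.degree p = 1 ∧ ∃ w : G.Walk v p, w.length ≤ 2


section AuxIS
set_option linter.unusedSectionVars false
set_option linter.unusedVariables false
open scoped Classical

variable (G : SimpleGraph V) [DecidableRel G.Adj]

lemma memIncFinset {e : Sym2 V} {v : V} : e ∈ incFinset G v ↔ e ∈ G.edgeSet ∧ v ∈ e := by
  simp [incFinset]

lemma card_incFinset (v : V) : (incFinset G v).card = G.degree v := by
  have : incFinset G v = G.incidenceFinset v := by
    ext e
    simp [memIncFinset, SimpleGraph.mem_incidenceFinset, SimpleGraph.incidenceSet]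
  rw [this, SimpleGraph.card_incidenceFinset_eq_degree]

lemma mem_onlyInc_iff {S : Finset (Sym2 V)} {v : V} :
    v ∈ onlyInc G (↑S : Set (Sym2 V)) ↔ incFinset G v ⊆ S := by
  constructor
  · intro h e he
    rw [memIncFinset] at he
    exact Finset.mem_coe.mp (h he)
  · intro h e he
    exact Finset.mem_coe.mpr (h ((memIncFinset G).mpr he))

def IsSuppV (v : V) : Prop := ∃ p, G.Adj v p ∧ G.degree p = 1
def IsXV (v : V) : Prop := G.degree v ≠ 1 ∧ ¬ IsSuppV G v
def MatchedV (v : V) : Prop := ∃ e, TypeI G e ∧ v ∈ e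
def XFreeV (v : V) : Prop := IsXV G v ∧ ¬ MatchedV G v

lemma exists_mem_sym2 (e : Sym2 V) : ∃ v, v ∈ e := by
  induction e using Sym2.ind with
  | _ x y => exact ⟨x, Sym2.mem_mk_left x y⟩

noncomputable def pickE (v : V) : Sym2 V :=
  if h : (incFinset G v).Nonempty then h.choose else s(v, v)

lemma pickE_mem {v : V} (h : G.degree v ≠ 0) : pickE G v ∈ incFinset G v := by
  have hne : (incFinset G v).Nonempty := by
    rw [← Finset.card_pos, card_incFinset]; omega
  rw [pickE, dif_pos hne]; exact hne.choose_spec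

noncomputable def pEnd (e : Sym2 V) : V :=
  if h : ∃ v, v ∈ e ∧ G.degree v = 1 then h.choose else (exists_mem_sym2 e).choose

lemma pEnd_spec {e : Sym2 V} (h : PendantEdge G e) :
    pEnd G e ∈ e ∧ G.degree (pEnd G e) = 1 := by
  have hex : ∃ v, v ∈ e ∧ G.degree v = 1 := by
    obtain ⟨-, v, hv, hd⟩ := h; exact ⟨v, hv, hd⟩
  rw [pEnd, dif_pos hex]; exact hex.choose_spec

noncomputable def cEnd (S : Finset (Sym2 V)) (e : Sym2 V) : V :=
  if h : ∃ v, v ∈ e ∧ incFinset G v ⊆ S then h.choose else (exists_mem_sym2 e).choose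

lemma cEnd_spec {S : Finset (Sym2 V)} {e : Sym2 V} (h : ∃ v, v ∈ e ∧ incFinset G v ⊆ S) :
    cEnd G S e ∈ e ∧ incFinset G (cEnd G S e) ⊆ S := by
  rw [cEnd, dif_pos h]; exact h.choose_spec

noncomputable def sEdge (v : V) : Sym2 V :=
  if h : IsSuppV G v then s(v, h.choose) else s(v, v)

noncomputable def tEdge (v : V) : Sym2 V :=
  if h : MatchedV G v then h.choose else s(v, v)

lemma edge_eq_mk {e : Sym2 V} {u v : V} (hu : u ∈ e) (hv : v ∈ e) (hne : u ≠ v) :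
    e = s(u, v) := (Sym2.mem_and_mem_iff hne).mp ⟨hu, hv⟩

lemma adj_of_mem {e : Sym2 V} {u v : V} (he : e ∈ G.edgeSet) (hu : u ∈ e) (hv : v ∈ e)
    (hne : u ≠ v) : G.Adj u v := by
  rw [edge_eq_mk hu hv hne] at he
  exact (G.mem_edgeSet).mp he

lemma pend_or_supp {e : Sym2 V} {w : V} (hp : PendantEdge G e) (hw : w ∈ e) :
    G.degree w = 1 ∨ IsSuppV G w := by
  obtain ⟨he, z, hz, hdz⟩ := hp
  by_cases hwz : w = z
  · left; rw [hwz]; exact hdz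
  · right; exact ⟨z, adj_of_mem G he hw hz hwz, hdz⟩

lemma typeI_mem_X {e : Sym2 V} {v : V} (ht : TypeI G e) (hv : v ∈ e) : IsXV G v := by
  constructor
  · intro hd; exact ht.2.1 ⟨ht.1, v, hv, hd⟩
  · rintro ⟨p, hadj, hdp⟩
    exact ht.2.2 s(v, p) ⟨(G.mem_edgeSet).mpr hadj, p, Sym2.mem_mk_right _ _, hdp⟩
      ⟨v, hv, Sym2.mem_mk_left _ _⟩

lemma adj_X_typeI {u v : V} (hadj : G.Adj u v) (hu : IsXV G u) (hv : IsXV G v) :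
    TypeI G s(u, v) := by
  refine ⟨(G.mem_edgeSet).mpr hadj, ?_, ?_⟩
  · rintro ⟨-, w, hw, hdw⟩
    rcases Sym2.mem_iff.mp hw with rfl | rfl
    · exact hu.1 hdw
    · exact hv.1 hdw
  · rintro f hf ⟨w, hw1, hw2⟩
    have hps := pend_or_supp G hf hw2
    rcases Sym2.mem_iff.mp hw1 with rfl | rfl
    · rcases hps with h | h
      exacts [hu.1 h, hu.2 h]
    · rcases hps with h | h
      exacts [hv.1 h, hv.2 h]

lemma incFinset_eq_singleton {v : V} {e : Sym2 V} (hd : G.degree v = 1)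
    (he : e ∈ incFinset G v) : incFinset G v = {e} := by
  have hc : (incFinset G v).card = 1 := by rw [card_incFinset]; exact hd
  obtain ⟨a, ha⟩ := Finset.card_eq_one.mp hc
  rw [ha] at he ⊢
  rw [Finset.mem_singleton] at he
  rw [he]

lemma alphaOn_le_of {U : Set V} {m : ℕ}
    (h : ∀ I : Finset V, ↑I ⊆ U → Indep G I → I.card ≤ m) : alphaOn G U ≤ m := by
  apply csSup_le
  · exact ⟨0, ∅, by simp, by intro u hu; simp at hu, by simp⟩
  · rintro n ⟨I, h1, hInd, rfl⟩
    exact h I h1 hInd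

lemma le_alphaOn_of {U : Set V} {I : Finset V} (h1 : ↑I ⊆ U) (h2 : Indep G I) :
    I.card ≤ alphaOn G U := by
  apply le_csSup
  · refine ⟨Fintype.card V, ?_⟩
    rintro n ⟨J, -, -, rfl⟩
    simpa using Finset.card_le_univ J
  · exact ⟨I, h1, h2, rfl⟩


noncomputable def cntA (S : Finset (Sym2 V)) : ℕ :=
  (S.filter (fun e => PendantEdge G e)).card

noncomputable def cntB (S : Finset (Sym2 V)) : ℕ :=
  (univ.filter (fun v => XFreeV G v ∧ incFinset G v ⊆ S)).card

noncomputable def cntC (S : Finset (Sym2 V)) : ℕ :=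
  (S.filter (fun e => TypeI G e ∧ ∃ v, v ∈ e ∧ incFinset G v ⊆ S)).card

noncomputable def allocN (S : Finset (Sym2 V)) (i : Sym2 V) : ℕ :=
  (if i ∈ S ∧ PendantEdge G i then 1 else 0)
  + (univ.filter (fun v => XFreeV G v ∧ pickE G v = i ∧ incFinset G v ⊆ S)).card
  + (if i ∈ S ∧ TypeI G i ∧ ∃ v, v ∈ i ∧ incFinset G v ⊆ S then 1 else 0)

lemma allocN_mono {S T : Finset (Sym2 V)} (hST : S ⊆ T) (i : Sym2 V) :
    allocN G S i ≤ allocN G T i := by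
  unfold allocN
  have h1 : (if i ∈ S ∧ PendantEdge G i then (1:ℕ) else 0)
      ≤ (if i ∈ T ∧ PendantEdge G i then (1:ℕ) else 0) := by
    by_cases h : i ∈ S ∧ PendantEdge G i
    · rw [if_pos h, if_pos ⟨hST h.1, h.2⟩]
    · rw [if_neg h]; exact Nat.zero_le _
  have hmid : (univ.filter (fun v => XFreeV G v ∧ pickE G v = i ∧ incFinset G v ⊆ S)).card
      ≤ (univ.filter (fun v => XFreeV G v ∧ pickE G v = i ∧ incFinset G v ⊆ T)).card := by
    apply Finset.card_le_card
    intro v hv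
    rw [Finset.mem_filter] at hv ⊢
    exact ⟨hv.1, hv.2.1, hv.2.2.1, hv.2.2.2.trans hST⟩
  have h3 : (if i ∈ S ∧ TypeI G i ∧ ∃ v, v ∈ i ∧ incFinset G v ⊆ S then (1:ℕ) else 0)
      ≤ (if i ∈ T ∧ TypeI G i ∧ ∃ v, v ∈ i ∧ incFinset G v ⊆ T then (1:ℕ) else 0) := by
    by_cases h : i ∈ S ∧ TypeI G i ∧ ∃ v, v ∈ i ∧ incFinset G v ⊆ S
    · obtain ⟨hiS, hT, v, hv, hvS⟩ := h
      rw [if_pos ⟨hiS, hT, v, hv, hvS⟩, if_pos ⟨hST hiS, hT, v, hv, hvS.trans hST⟩]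
    · rw [if_neg h]; exact Nat.zero_le _
  exact Nat.add_le_add (Nat.add_le_add h1 hmid) h3

lemma sum_allocN (hiso : ∀ v : V, G.degree v ≠ 0) (S : Finset (Sym2 V)) :
    ∑ i ∈ S, allocN G S i = cntA G S + cntB G S + cntC G S := by
  unfold allocN
  rw [Finset.sum_add_distrib, Finset.sum_add_distrib]
  have e1 : ∑ i ∈ S, (if i ∈ S ∧ PendantEdge G i then (1:ℕ) else 0) = cntA G S := by
    rw [cntA, Finset.card_filter]
    exact Finset.sum_congr rfl fun i hi => by simp [hi]
  have e3 : ∑ i ∈ S, (if i ∈ S ∧ TypeI G i ∧ ∃ v, v ∈ i ∧ incFinset G v ⊆ S then (1:ℕ) else 0)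
      = cntC G S := by
    rw [cntC, Finset.card_filter]
    exact Finset.sum_congr rfl fun i hi => by simp [hi]
  have e2 : ∑ i ∈ S,
      (univ.filter (fun v => XFreeV G v ∧ pickE G v = i ∧ incFinset G v ⊆ S)).card
      = cntB G S := by
    rw [cntB]
    rw [Finset.card_eq_sum_card_fiberwise (f := pickE G) (t := S)
      (fun v hv => by
        rw [Finset.mem_coe, Finset.mem_filter] at hv
        exact hv.2.2 (pickE_mem G (hiso v)))]
    refine Finset.sum_congr rfl fun i _ => ?_
    rw [Finset.filter_filter]
    congr 1
    ext v
    simp only [Finset.mem_filter, Finset.mem_univ, true_and]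
    tauto
  rw [e1, e2, e3]

lemma gamma_le (h2 : ∀ e f : Sym2 V, TypeI G e → TypeI G f → e ≠ f →
      ¬ ∃ w : V, w ∈ e ∧ w ∈ f) (S : Finset (Sym2 V)) :
    alphaOn G (onlyInc G ↑S) ≤ cntA G S + cntB G S + cntC G S := by
  apply alphaOn_le_of
  intro I hIU hInd
  have hIS : ∀ v ∈ I, incFinset G v ⊆ S := fun v hv =>
    (mem_onlyInc_iff G).mp (hIU hv)
  have hc1 : (I.filter (fun v => G.degree v = 1 ∨ IsSuppV G v)).card
      + (I.filter (fun v => ¬ (G.degree v = 1 ∨ IsSuppV G v))).card = I.card :=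
    Finset.card_filter_add_card_filter_not _
  have hc2 : ((I.filter (fun v => ¬ (G.degree v = 1 ∨ IsSuppV G v))).filter
        (fun v => MatchedV G v)).card
      + ((I.filter (fun v => ¬ (G.degree v = 1 ∨ IsSuppV G v))).filter
        (fun v => ¬ MatchedV G v)).card
      = (I.filter (fun v => ¬ (G.degree v = 1 ∨ IsSuppV G v))).card :=
    Finset.card_filter_add_card_filter_not _
  -- bound for pendant vertices and supports
  have hA : (I.filter (fun v => G.degree v = 1 ∨ IsSuppV G v)).card ≤ cntA G S := by
    have key : ∀ v ∈ I.filter (fun v => G.degree v = 1 ∨ IsSuppV G v),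
        v ∈ (if G.degree v = 1 then pickE G v else sEdge G v)
        ∧ (if G.degree v = 1 then pickE G v else sEdge G v)
            ∈ S.filter (fun e => PendantEdge G e) := by
      intro v hv
      rw [Finset.mem_filter] at hv
      obtain ⟨hvI, hq⟩ := hv
      by_cases hd : G.degree v = 1
      · rw [if_pos hd]
        have hm := pickE_mem G (v := v) (by omega)
        obtain ⟨hes, hve⟩ := (memIncFinset G).mp hm
        exact ⟨hve, Finset.mem_filter.mpr ⟨hIS v hvI hm, hes, v, hve, hd⟩⟩
      · rw [if_neg hd]
        have hs : IsSuppV G v := hq.resolve_left hd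
        rw [sEdge, dif_pos hs]
        obtain ⟨hadj, hdp⟩ := hs.choose_spec
        have hm : s(v, hs.choose) ∈ incFinset G v :=
          (memIncFinset G).mpr ⟨(G.mem_edgeSet).mpr hadj, Sym2.mem_mk_left _ _⟩
        exact ⟨Sym2.mem_mk_left _ _, Finset.mem_filter.mpr
          ⟨hIS v hvI hm, (G.mem_edgeSet).mpr hadj, hs.choose, Sym2.mem_mk_right _ _, hdp⟩⟩
    rw [cntA]
    apply Finset.card_le_card_of_injOn _ (fun v hv => (key v hv).2)
    intro u hu v hv heq
    by_contra hne
    have hu' := key u (Finset.mem_coe.mp hu)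
    have hv' := key v (Finset.mem_coe.mp hv)
    have hes : (if G.degree v = 1 then pickE G v else sEdge G v) ∈ G.edgeSet :=
      (Finset.mem_filter.mp hv'.2).2.1
    have heq' : (if G.degree u = 1 then pickE G u else sEdge G u)
        = (if G.degree v = 1 then pickE G v else sEdge G v) := heq
    have humem : u ∈ (if G.degree v = 1 then pickE G v else sEdge G v) := heq' ▸ hu'.1
    have hadj := adj_of_mem G hes humem hv'.1 hne
    have hsub : I.filter (fun v => G.degree v = 1 ∨ IsSuppV G v) ⊆ I :=
      Finset.filter_subset _ _
    exact hInd u (hsub (Finset.mem_coe.mp hu)) v (hsub (Finset.mem_coe.mp hv)) hadj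
  -- bound for matched X vertices
  have hC : ((I.filter (fun v => ¬ (G.degree v = 1 ∨ IsSuppV G v))).filter
      (fun v => MatchedV G v)).card ≤ cntC G S := by
    have key : ∀ v ∈ (I.filter (fun v => ¬ (G.degree v = 1 ∨ IsSuppV G v))).filter
        (fun v => MatchedV G v),
        v ∈ tEdge G v ∧ tEdge G v
          ∈ S.filter (fun e => TypeI G e ∧ ∃ w, w ∈ e ∧ incFinset G w ⊆ S) := by
      intro v hv
      rw [Finset.mem_filter, Finset.mem_filter] at hv
      obtain ⟨⟨hvI, -⟩, hm⟩ := hv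
      rw [tEdge, dif_pos hm]
      obtain ⟨hT, hve⟩ := hm.choose_spec
      have hminc : hm.choose ∈ incFinset G v := (memIncFinset G).mpr ⟨hT.1, hve⟩
      exact ⟨hve, Finset.mem_filter.mpr ⟨hIS v hvI hminc, hT, v, hve, hIS v hvI⟩⟩
    rw [cntC]
    apply Finset.card_le_card_of_injOn _ (fun v hv => (key v hv).2)
    intro u hu v hv heq
    by_contra hne
    have hu' := key u (Finset.mem_coe.mp hu)
    have hv' := key v (Finset.mem_coe.mp hv)
    have hes : tEdge G v ∈ G.edgeSet := (Finset.mem_filter.mp hv'.2).2.1.1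
    have heq' : tEdge G u = tEdge G v := heq
    have humem : u ∈ tEdge G v := heq' ▸ hu'.1
    have hadj := adj_of_mem G hes humem hv'.1 hne
    have hsub : (I.filter (fun v => ¬ (G.degree v = 1 ∨ IsSuppV G v))).filter
        (fun v => MatchedV G v) ⊆ I :=
      (Finset.filter_subset _ _).trans (Finset.filter_subset _ _)
    exact hInd u (hsub (Finset.mem_coe.mp hu)) v (hsub (Finset.mem_coe.mp hv)) hadj
  -- bound for free X vertices
  have hB : ((I.filter (fun v => ¬ (G.degree v = 1 ∨ IsSuppV G v))).filter
      (fun v => ¬ MatchedV G v)).card ≤ cntB G S := by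
    rw [cntB]
    apply Finset.card_le_card
    intro v hv
    rw [Finset.mem_filter, Finset.mem_filter] at hv
    obtain ⟨⟨hvI, hnq⟩, hnm⟩ := hv
    push_neg at hnq
    exact Finset.mem_filter.mpr ⟨Finset.mem_univ v, ⟨⟨hnq.1, hnq.2⟩, hnm⟩, hIS v hvI⟩
  omega

lemma gamma_ge (h2 : ∀ e f : Sym2 V, TypeI G e → TypeI G f → e ≠ f →
      ¬ ∃ w : V, w ∈ e ∧ w ∈ f) (S : Finset (Sym2 V)) :
    cntA G S + cntB G S + cntC G S ≤ alphaOn G (onlyInc G ↑S) := by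
  set IA := (S.filter (fun e => PendantEdge G e)).image (pEnd G) with hIA
  set IB := univ.filter (fun v => XFreeV G v ∧ incFinset G v ⊆ S) with hIB
  set IC := (S.filter (fun e => TypeI G e ∧ ∃ v, v ∈ e ∧ incFinset G v ⊆ S)).image
    (cEnd G S) with hIC
  have specA : ∀ a ∈ IA, G.degree a = 1 ∧ incFinset G a ⊆ S := by
    intro a ha
    rw [hIA, Finset.mem_image] at ha
    obtain ⟨e, he, rfl⟩ := ha
    rw [Finset.mem_filter] at he
    obtain ⟨heS, hpe⟩ := he
    obtain ⟨hmem, hdeg⟩ := pEnd_spec G hpe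
    refine ⟨hdeg, ?_⟩
    rw [incFinset_eq_singleton G hdeg ((memIncFinset G).mpr ⟨hpe.1, hmem⟩)]
    simpa using heS
  have specB : ∀ a ∈ IB, (IsXV G a ∧ ¬ MatchedV G a) ∧ incFinset G a ⊆ S := by
    intro a ha
    rw [hIB, Finset.mem_filter] at ha
    exact ha.2
  have specC : ∀ a ∈ IC, IsXV G a ∧ MatchedV G a ∧ incFinset G a ⊆ S := by
    intro a ha
    rw [hIC, Finset.mem_image] at ha
    obtain ⟨e, he, rfl⟩ := ha
    rw [Finset.mem_filter] at he
    obtain ⟨heS, hT, hex⟩ := he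
    obtain ⟨hmem, hinc⟩ := cEnd_spec G hex
    exact ⟨typeI_mem_X G hT hmem, ⟨e, hT, hmem⟩, hinc⟩
  have hAX : ∀ a b : V, G.degree a = 1 → IsXV G b → G.Adj a b → False := by
    intro a b hda hb hadj
    exact hb.2 ⟨a, hadj.symm, hda⟩
  have hindep : Indep G (IA ∪ IB ∪ IC) := by
    intro u hu v hv hadj
    have hne : u ≠ v := G.ne_of_adj hadj
    rcases Finset.mem_union.mp hu with hu' | huC
    · rcases Finset.mem_union.mp hu' with huA | huB
      · -- u ∈ IA
        rcases Finset.mem_union.mp hv with hv' | hvC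
        · rcases Finset.mem_union.mp hv' with hvA | hvB
          · -- both in IA
            obtain ⟨e, he, hue⟩ := Finset.mem_image.mp (hIA ▸ huA)
            obtain ⟨f, hf, hvf⟩ := Finset.mem_image.mp (hIA ▸ hvA)
            rw [Finset.mem_filter] at he hf
            obtain ⟨hmem1, hdeg1⟩ := pEnd_spec G he.2
            obtain ⟨hmem2, hdeg2⟩ := pEnd_spec G hf.2
            rw [hue] at hmem1 hdeg1
            rw [hvf] at hmem2 hdeg2
            have hsu : s(u, v) ∈ incFinset G u :=
              (memIncFinset G).mpr ⟨(G.mem_edgeSet).mpr hadj, Sym2.mem_mk_left _ _⟩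
            have hsv : s(u, v) ∈ incFinset G v :=
              (memIncFinset G).mpr ⟨(G.mem_edgeSet).mpr hadj, Sym2.mem_mk_right _ _⟩
            have he1 : e ∈ incFinset G u := (memIncFinset G).mpr ⟨he.2.1, hmem1⟩
            have hf1 : f ∈ incFinset G v := (memIncFinset G).mpr ⟨hf.2.1, hmem2⟩
            rw [incFinset_eq_singleton G hdeg1 he1, Finset.mem_singleton] at hsu
            rw [incFinset_eq_singleton G hdeg2 hf1, Finset.mem_singleton] at hsv
            have : e = f := by rw [← hsu, ← hsv]
            rw [← hue, ← hvf, this] at hne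
            exact hne rfl
          · exact hAX u v (specA u huA).1 (specB v hvB).1.1 hadj
        · exact hAX u v (specA u huA).1 (specC v hvC).1 hadj
      · -- u ∈ IB
        rcases Finset.mem_union.mp hv with hv' | hvC
        · rcases Finset.mem_union.mp hv' with hvA | hvB
          · exact hAX v u (specA v hvA).1 (specB u huB).1.1 hadj.symm
          · have ht := adj_X_typeI G hadj (specB u huB).1.1 (specB v hvB).1.1
            exact (specB u huB).1.2 ⟨s(u, v), ht, Sym2.mem_mk_left _ _⟩
        · have ht := adj_X_typeI G hadj (specB u huB).1.1 (specC v hvC).1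
          exact (specB u huB).1.2 ⟨s(u, v), ht, Sym2.mem_mk_left _ _⟩
    · -- u ∈ IC
      rcases Finset.mem_union.mp hv with hv' | hvC
      · rcases Finset.mem_union.mp hv' with hvA | hvB
        · exact hAX v u (specA v hvA).1 (specC u huC).1 hadj.symm
        · have ht := adj_X_typeI G hadj (specC u huC).1 (specB v hvB).1.1
          exact (specB v hvB).1.2 ⟨s(u, v), ht, Sym2.mem_mk_right _ _⟩
      · -- both in IC
        obtain ⟨e, he, hue⟩ := Finset.mem_image.mp (hIC ▸ huC)
        obtain ⟨f, hf, hvf⟩ := Finset.mem_image.mp (hIC ▸ hvC)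
        rw [Finset.mem_filter] at he hf
        obtain ⟨hmem1, -⟩ := cEnd_spec G he.2.2
        obtain ⟨hmem2, -⟩ := cEnd_spec G hf.2.2
        rw [hue] at hmem1
        rw [hvf] at hmem2
        have ht := adj_X_typeI G hadj (specC u huC).1 (specC v hvC).1
        have hte : s(u, v) = e := by
          by_contra hne'
          exact h2 s(u, v) e ht he.2.1 hne' ⟨u, Sym2.mem_mk_left _ _, hmem1⟩
        have htf : s(u, v) = f := by
          by_contra hne'
          exact h2 s(u, v) f ht hf.2.1 hne' ⟨v, Sym2.mem_mk_right _ _, hmem2⟩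
        have : e = f := by rw [← hte, ← htf]
        rw [← hue, ← hvf, this] at hne
        exact hne rfl
  have hdisjAB : Disjoint IA IB := by
    rw [Finset.disjoint_left]
    intro a haA haB
    exact (specB a haB).1.1.1 (specA a haA).1
  have hdisjAC : Disjoint IA IC := by
    rw [Finset.disjoint_left]
    intro a haA haC
    exact (specC a haC).1.1 (specA a haA).1
  have hdisjBC : Disjoint IB IC := by
    rw [Finset.disjoint_left]
    intro a haB haC
    exact (specB a haB).1.2 (specC a haC).2.1
  have cA : IA.card = cntA G S := by
    rw [hIA, cntA]
    apply Finset.card_image_of_injOn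
    intro e he f hf heq
    rw [Finset.mem_coe, Finset.mem_filter] at he hf
    obtain ⟨hm1, hd1⟩ := pEnd_spec G he.2
    obtain ⟨hm2, hd2⟩ := pEnd_spec G hf.2
    have h1 : e ∈ incFinset G (pEnd G e) := (memIncFinset G).mpr ⟨he.2.1, hm1⟩
    have h2' : f ∈ incFinset G (pEnd G e) := by
      rw [heq]; exact (memIncFinset G).mpr ⟨hf.2.1, hm2⟩
    rw [incFinset_eq_singleton G hd1 h1, Finset.mem_singleton] at h2'
    exact h2'.symm
  have cC : IC.card = cntC G S := by
    rw [hIC, cntC]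
    apply Finset.card_image_of_injOn
    intro e he f hf heq
    rw [Finset.mem_coe, Finset.mem_filter] at he hf
    obtain ⟨hm1, -⟩ := cEnd_spec G he.2.2
    obtain ⟨hm2, -⟩ := cEnd_spec G hf.2.2
    by_contra hne
    have heq' : cEnd G S e = cEnd G S f := heq
    exact h2 e f he.2.1 hf.2.1 hne ⟨cEnd G S e, hm1, heq' ▸ hm2⟩
  have cB : IB.card = cntB G S := by rw [hIB, cntB]
  have hcard : (IA ∪ IB ∪ IC).card = cntA G S + cntB G S + cntC G S := by
    rw [Finset.card_union_of_disjoint (Finset.disjoint_union_left.mpr ⟨hdisjAC, hdisjBC⟩),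
      Finset.card_union_of_disjoint hdisjAB, cA, cB, cC]
  have hsub : ↑(IA ∪ IB ∪ IC) ⊆ onlyInc G (↑S : Set (Sym2 V)) := by
    intro a ha
    rw [Finset.mem_coe] at ha
    change onlyInc G (↑S : Set (Sym2 V)) a
    rcases Finset.mem_union.mp ha with h' | hC
    · rcases Finset.mem_union.mp h' with hA | hB
      · exact (mem_onlyInc_iff G).mpr (specA a hA).2
      · exact (mem_onlyInc_iff G).mpr (specB a hB).2
    · exact (mem_onlyInc_iff G).mpr (specC a hC).2.2
  calc cntA G S + cntB G S + cntC G S = (IA ∪ IB ∪ IC).card := hcard.symm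
    _ ≤ alphaOn G (onlyInc G ↑S) := le_alphaOn_of G hsub hindep

lemma gamma_formula (h2 : ∀ e f : Sym2 V, TypeI G e → TypeI G f → e ≠ f →
      ¬ ∃ w : V, w ∈ e ∧ w ∈ f) (S : Finset (Sym2 V)) :
    alphaOn G (onlyInc G ↑S) = cntA G S + cntB G S + cntC G S :=
  le_antisymm (gamma_le G h2 S) (gamma_ge G h2 S)

end AuxIS

/-- Lemma 8 of the paper.  If every vertex of `G` has distance
at most two to a pendant vertex, and no two distinct non-pendant edges of type I
are incident, then the independent set game on `G` is population monotonic. -/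
theorem stmt_8 (G : SimpleGraph V) [DecidableRel G.Adj]
    (hiso : ∀ v : V, G.degree v ≠ 0)
    (h1 : ∀ v : V, NearPendant G v)
    (h2 : ∀ e f : Sym2 V, TypeI G e → TypeI G f → e ≠ f →
      ¬ ∃ w : V, w ∈ e ∧ w ∈ f) :
    ∃ x : Finset (Sym2 V) → Sym2 V → ℝ, IsPMAS G x := by
  refine ⟨fun S i => (allocN G S i : ℝ), ?_, ?_, ?_⟩
  · intro S _ i _
    exact Nat.cast_nonneg _
  · intro S _ _
    have hkey : (∑ i ∈ S, allocN G S i) = gammaIS G S := by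
      rw [sum_allocN G hiso S]
      unfold gammaIS
      exact (gamma_formula G h2 S).symm
    rw [← Nat.cast_sum, hkey]
  · intro S T hST _ _ i _
    exact Nat.cast_le.mpr (allocN_mono G hST i)
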